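/- arXiv:2601.09357 — 4 statements merged into one kernel-verified Lean document; each statement's English description precedes it below -/
import Mathlib

section
/- Katriel's normal-ordering formula: for every natural number n ≥ 1, the n-th power of the linear operator p ↦ X·(d/dX)p on the polynomial ring ℚ[X] equals the sum over k = 1,…,n of S(n,k) times the operator p ↦ X^k·(d/dX)^k p, where S(n,k) denotes the Stirling number of the second kind, i.e. the number of set partitions of {1,…,n} into exactly k blocks. -/
/-- A set partition of `{1,…,n}` (modelled as `Fin n`): a collection of pairwise
disjoint nonempty blocks whose union is everything. -/
def IsSetPartition (n : ℕ) (π : Finset (Finset (Fin n))) : Prop :=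
  (∀ B ∈ π, B.Nonempty) ∧
  (∀ B ∈ π, ∀ C ∈ π, B ≠ C → B ∩ C = ∅) ∧
  π.sup id = Finset.univ

open scoped Classical in
/-- The set of all set partitions of `{1,…,n}`. -/
noncomputable def setPartitions (n : ℕ) : Finset (Finset (Finset (Fin n))) :=
  Finset.univ.filter (IsSetPartition n)

open scoped Classical in
/-- The Stirling number of the second kind: the number of set partitions of
`{1,…,n}` into exactly `k` blocks. -/
noncomputable def stirling2 (n k : ℕ) : ℕ :=
  ((setPartitions n).filter (fun π => π.card = k)).card

section Aux

open Finset Polynomial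
open scoped Classical

variable {n m : ℕ}

noncomputable def ker (f : Fin n → Fin m) : Finset (Finset (Fin n)) :=
  Finset.univ.image (fun i => Finset.univ.filter (fun j => f j = f i))

lemma ker_mem (f : Fin n → Fin m) : ker f ∈ setPartitions n := by
  rw [setPartitions, mem_filter]
  refine ⟨mem_univ _, ?_, ?_, ?_⟩
  · rintro B hB
    obtain ⟨i, -, rfl⟩ := mem_image.1 hB
    exact ⟨i, by simp⟩
  · rintro B hB C hC hne
    obtain ⟨i, -, rfl⟩ := mem_image.1 hB
    obtain ⟨j, -, rfl⟩ := mem_image.1 hC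
    rw [eq_empty_iff_forall_notMem]
    intro x hx
    simp only [mem_inter, mem_filter, mem_univ, true_and] at hx
    exact hne (by ext y; simp [← hx.1, ← hx.2])
  · refine le_antisymm le_top ?_
    intro x _
    rw [Finset.mem_sup]
    exact ⟨_, mem_image_of_mem _ (mem_univ x), by simp⟩

lemma block_unique {π : Finset (Finset (Fin n))} (hπ : IsSetPartition n π) (i : Fin n) :
    ∃! B, B ∈ π ∧ i ∈ B := by
  have hx : i ∈ π.sup id := hπ.2.2 ▸ mem_univ i
  rw [Finset.mem_sup] at hx
  obtain ⟨B, hB, hiB⟩ := hx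
  refine ⟨B, ⟨hB, hiB⟩, ?_⟩
  rintro C ⟨hC, hiC⟩
  by_contra hne
  have := hπ.2.1 C hC B hB hne
  have : i ∈ C ∩ B := mem_inter.2 ⟨hiC, hiB⟩
  simp_all

lemma block_eq_fiber {π : Finset (Finset (Fin n))} {f : Fin n → Fin m} (hf : ker f = π)
    {B : Finset (Fin n)} (hB : B ∈ π) {x : Fin n} (hx : x ∈ B) :
    B = Finset.univ.filter (fun j => f j = f x) := by
  rw [← hf] at hB
  obtain ⟨i, -, rfl⟩ := mem_image.1 hB
  have hfx : f x = f i := by simpa using hx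
  ext y; simp [hfx]

lemma f_const {π : Finset (Finset (Fin n))} {f : Fin n → Fin m} (hf : ker f = π)
    {B : Finset (Fin n)} (hB : B ∈ π) {x y : Fin n} (hx : x ∈ B) (hy : y ∈ B) :
    f y = f x := by
  have h := block_eq_fiber hf hB hx
  rw [h] at hy
  simpa using hy

noncomputable def blockOf {π : Finset (Finset (Fin n))} (hπ : IsSetPartition n π)
    (i : Fin n) : Finset (Fin n) :=
  Finset.choose (fun B => i ∈ B) π (block_unique hπ i)

lemma blockOf_mem {π : Finset (Finset (Fin n))} (hπ : IsSetPartition n π) (i : Fin n) :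
    blockOf hπ i ∈ π := Finset.choose_mem _ _ _

lemma mem_blockOf {π : Finset (Finset (Fin n))} (hπ : IsSetPartition n π) (i : Fin n) :
    i ∈ blockOf hπ i := Finset.choose_property (fun B => i ∈ B) π (block_unique hπ i)

lemma blockOf_eq {π : Finset (Finset (Fin n))} (hπ : IsSetPartition n π)
    {B : Finset (Fin n)} {i : Fin n} (hB : B ∈ π) (hi : i ∈ B) : blockOf hπ i = B :=
  (block_unique hπ i).unique ⟨blockOf_mem hπ i, mem_blockOf hπ i⟩ ⟨hB, hi⟩

noncomputable def kerEquiv {π : Finset (Finset (Fin n))} (hπ : π ∈ setPartitions n) :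
    {f : Fin n → Fin m // ker f = π} ≃ ({B // B ∈ π} ↪ Fin m) where
  toFun := fun ⟨f, hf⟩ =>
    ⟨fun B => f (B.1.min' ((mem_filter.1 hπ).2.1 B.1 B.2)), by
      rintro ⟨B, hB⟩ ⟨C, hC⟩ h
      simp only at h
      have hBne := (mem_filter.1 hπ).2.1 B hB
      have hCne := (mem_filter.1 hπ).2.1 C hC
      have h1 := block_eq_fiber hf hB (B.min'_mem hBne)
      have h2 := block_eq_fiber hf hC (C.min'_mem hCne)
      refine Subtype.ext ?_
      show B = C
      rw [h1, h2, h]⟩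
  invFun := fun g =>
    ⟨fun i => g ⟨blockOf (mem_filter.1 hπ).2 i, blockOf_mem _ i⟩, by
      have hπ' := (mem_filter.1 hπ).2
      have key : ∀ i, Finset.univ.filter
          (fun j => g ⟨blockOf hπ' j, blockOf_mem hπ' j⟩ =
            g ⟨blockOf hπ' i, blockOf_mem hπ' i⟩) = blockOf hπ' i := by
        intro i
        ext j
        simp only [mem_filter, mem_univ, true_and]
        constructor
        · intro h
          have : blockOf hπ' j = blockOf hπ' i := congrArg Subtype.val (g.injective h)
          exact this ▸ mem_blockOf hπ' j
        · intro h
          have : blockOf hπ' j = blockOf hπ' i :=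
            blockOf_eq hπ' (blockOf_mem hπ' i) h
          congr 1
          exact Subtype.ext this
      apply le_antisymm
      · intro B hB
        obtain ⟨i, -, rfl⟩ := mem_image.1 hB
        exact (key i) ▸ blockOf_mem hπ' i
      · intro B hB
        obtain ⟨x, hx⟩ := hπ'.1 B hB
        rw [← blockOf_eq hπ' hB hx, ← key x]
        exact mem_image_of_mem _ (mem_univ x)⟩
  left_inv := by
    rintro ⟨f, hf⟩
    refine Subtype.ext ?_
    funext i
    have hπ' := (mem_filter.1 hπ).2
    exact f_const hf (blockOf_mem hπ' i) (mem_blockOf hπ' i)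
      (min'_mem _ ((mem_filter.1 hπ).2.1 _ (blockOf_mem hπ' i)))
  right_inv := by
    intro g
    refine Function.Embedding.ext fun ⟨B, hB⟩ => ?_
    refine congrArg g (Subtype.ext ?_)
    show blockOf (mem_filter.1 hπ).2 _ = B
    refine blockOf_eq _ hB ?_
    exact B.min'_mem ((mem_filter.1 hπ).2.1 B hB)

lemma card_ker_fiber {π : Finset (Finset (Fin n))} (hπ : π ∈ setPartitions n) :
    (Finset.univ.filter (fun f : Fin n → Fin m => ker f = π)).card =
      m.descFactorial π.card := by
  rw [← Fintype.card_subtype]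
  rw [Fintype.card_congr (kerEquiv hπ), Fintype.card_embedding_eq, Fintype.card_coe,
    Fintype.card_fin]

lemma card_blocks_mem {π : Finset (Finset (Fin n))} (hn : 1 ≤ n)
    (hπ : π ∈ setPartitions n) : π.card ∈ Icc 1 n := by
  have hπ' := (mem_filter.1 hπ).2
  rw [mem_Icc]
  constructor
  · rw [Nat.one_le_iff_ne_zero, ← Nat.pos_iff_ne_zero, card_pos]
    by_contra h
    rw [not_nonempty_iff_eq_empty] at h
    have := hπ'.2.2
    rw [h] at this
    simp only [Finset.sup_empty] at this
    have : (⟨0, hn⟩ : Fin n) ∈ (⊥ : Finset (Fin n)) := this ▸ mem_univ _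
    simp at this
  · have hdisj : (π : Set (Finset (Fin n))).PairwiseDisjoint id := by
      intro B hB C hC hne
      simp only [Function.onFun, id]
      rw [Finset.disjoint_iff_inter_eq_empty]
      exact hπ'.2.1 B hB C hC hne
    have hsum : ∑ B ∈ π, B.card = n := by
      have h := Finset.card_biUnion (s := π) (t := id) (fun B hB C hC h => hdisj hB hC h)
      rw [← Finset.sup_eq_biUnion, hπ'.2.2, card_univ, Fintype.card_fin] at h
      simpa using h.symm
    calc π.card = ∑ _B ∈ π, 1 := by simp
    _ ≤ ∑ B ∈ π, B.card :=
        Finset.sum_le_sum (fun B hB => Finset.card_pos.2 (hπ'.1 B hB))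
    _ = n := hsum

lemma keyA (n m : ℕ) (hn : 1 ≤ n) :
    m ^ n = ∑ k ∈ Icc 1 n, stirling2 n k * m.descFactorial k := by
  have h1 : m ^ n = Fintype.card (Fin n → Fin m) := by simp
  rw [h1, ← Finset.card_univ,
    Finset.card_eq_sum_card_fiberwise (f := ker) (t := setPartitions n)
      (fun f _ => ker_mem f),
    Finset.sum_congr rfl (fun π hπ => card_ker_fiber hπ),
    ← Finset.sum_fiberwise_of_maps_to (g := fun π => π.card) (fun π hπ => card_blocks_mem hn hπ)]
  refine Finset.sum_congr rfl fun k _ => ?_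
  rw [Finset.sum_congr rfl (fun π hπ => by rw [(mem_filter.1 hπ).2]),
    Finset.sum_const, smul_eq_mul, stirling2]

noncomputable def Phi : Polynomial ℚ → Polynomial ℚ := fun q => X * derivative q

lemma iter_phi_add (n : ℕ) (p q : Polynomial ℚ) :
    Phi^[n] (p + q) = Phi^[n] p + Phi^[n] q := by
  induction n generalizing p q with
  | zero => simp
  | succ n ih =>
    rw [Function.iterate_succ_apply, Function.iterate_succ_apply, Function.iterate_succ_apply]
    rw [show Phi (p + q) = Phi p + Phi q by simp [Phi, mul_add], ih]

lemma iter_phi_smul (n : ℕ) (c : ℚ) (p : Polynomial ℚ) :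
    Phi^[n] (c • p) = c • Phi^[n] p := by
  induction n generalizing p with
  | zero => simp
  | succ n ih =>
    rw [Function.iterate_succ_apply, Function.iterate_succ_apply]
    rw [show Phi (c • p) = c • Phi p by simp [Phi, mul_smul_comm], ih]

lemma iter_phi_zero (n : ℕ) : Phi^[n] (0 : Polynomial ℚ) = 0 := by
  have := iter_phi_smul n 0 0
  simpa using this

lemma iter_deriv_add (k : ℕ) (p q : Polynomial ℚ) :
    (fun q : Polynomial ℚ => derivative q)^[k] (p + q) =
      (fun q : Polynomial ℚ => derivative q)^[k] p +
        (fun q : Polynomial ℚ => derivative q)^[k] q := by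
  induction k generalizing p q with
  | zero => simp
  | succ k ih =>
    simp only [Function.iterate_succ_apply, derivative_add]
    exact ih _ _

lemma iter_phi_pow (n m : ℕ) :
    Phi^[n] (X ^ m : Polynomial ℚ) = ((m : ℚ) ^ n) • X ^ m := by
  induction n with
  | zero => simp
  | succ n ih =>
    rw [Function.iterate_succ_apply]
    have hphi : Phi (X ^ m : Polynomial ℚ) = (m : ℚ) • X ^ m := by
      cases m with
      | zero => simp [Phi]
      | succ j =>
        rw [Phi, derivative_X_pow, smul_eq_C_mul, Nat.add_sub_cancel]
        push_cast
        ring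
    rw [hphi, iter_phi_smul, ih, smul_smul]
    ring_nf

end Aux

open Finset Polynomial in
/-- Katriel's normal-ordering formula. -/
theorem katriel (n : ℕ) (hn : 1 ≤ n) (p : Polynomial ℚ) :
    (fun q : Polynomial ℚ => Polynomial.X * Polynomial.derivative q)^[n] p =
      ∑ k ∈ Finset.Icc 1 n,
        (stirling2 n k : ℚ) •
          (Polynomial.X ^ k * (fun q : Polynomial ℚ => Polynomial.derivative q)^[k] p) := by
  show Phi^[n] p = _
  induction p using Polynomial.induction_on' with
  | add p q hp hq =>
    simp only [iter_phi_add, iter_deriv_add, mul_add, smul_add,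
      Finset.sum_add_distrib, hp, hq]
  | monomial m c =>
    rw [← Polynomial.smul_X_eq_monomial, iter_phi_smul, iter_phi_pow]
    have hterm : ∀ k ∈ Finset.Icc 1 n,
        (stirling2 n k : ℚ) •
            (X ^ k * (fun q : Polynomial ℚ => derivative q)^[k] (c • X ^ m)) =
          c • (((stirling2 n k * m.descFactorial k : ℕ) : ℚ) • X ^ m) := by
      intro k hk
      have hD : (fun q : Polynomial ℚ => derivative q)^[k] (c • X ^ m) =
          c • ((m.descFactorial k : ℚ) • X ^ (m - k)) := by
        show (⇑derivative)^[k] _ = _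
        rw [Polynomial.iterate_derivative_smul, Polynomial.iterate_derivative_X_pow_eq_smul]
      rw [hD]
      rcases le_or_gt k m with h | h
      · rw [mul_smul_comm, mul_smul_comm, ← pow_add, Nat.add_sub_cancel' h,
          smul_smul, smul_smul, smul_smul]
        push_cast
        ring_nf
      · rw [Nat.descFactorial_eq_zero_iff_lt.2 h]
        push_cast
        simp
    rw [Finset.sum_congr rfl hterm, ← Finset.smul_sum, ← Finset.sum_smul,
      ← Nat.cast_sum, ← keyA n m hn]
    push_cast
    rw [smul_comm]
end

section
/- Exponential formula (combinatorial form of Corollary on β-series): let a : ℕ → ℚ be any sequence. For n ≥ 0 define β_n = Σ_π Π_{B ∈ π} a(|B|), where the sum ranges over all set partitions π of {1,…,n} and the product over the blocks B of π (so β_0 = 1, from the empty partition). Then in the formal power series ring ℚ[[X]] one has Σ_{n≥0} β_n X^n/n! = exp( Σ_{n≥1} a(n) X^n/n! ), where exp is applied to a power series with zero constant term. -/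
/-- The exponential `Σ_{k≥0} F^k / k!` of a power series `F` with zero constant
term, computed coefficientwise (when the constant term of `F` is zero, the
coefficient of `X^n` in `F^k` vanishes for `k > n`). -/
noncomputable def expComp (F : PowerSeries ℚ) : PowerSeries ℚ :=
  PowerSeries.mk fun n => ∑ k ∈ Finset.range (n + 1),
    (k.factorial : ℚ)⁻¹ * PowerSeries.coeff (R := ℚ) n (F ^ k)

/-- `β_n = Σ_π Π_{B ∈ π} a(|B|)`, summed over all set partitions of `{1,…,n}`. -/
noncomputable def beta (a : ℕ → ℚ) (n : ℕ) : ℚ :=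
  ∑ π ∈ setPartitions n, ∏ B ∈ π, a B.card

section Combinatorial
open Finset
open scoped Classical
set_option linter.unusedSectionVars false
variable {α : Type*} [Fintype α] [DecidableEq α]

noncomputable def parts (s : Finset α) : Finset (Finset (Finset α)) :=
  Finset.univ.filter fun π => (∀ B ∈ π, B.Nonempty) ∧
    (∀ B ∈ π, ∀ C ∈ π, B ≠ C → B ∩ C = ∅) ∧ π.sup id = s

lemma mem_parts {s : Finset α} {π : Finset (Finset α)} :
    π ∈ parts s ↔ (∀ B ∈ π, B.Nonempty) ∧
      (∀ B ∈ π, ∀ C ∈ π, B ≠ C → B ∩ C = ∅) ∧ π.sup id = s := by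
  simp [parts]

noncomputable def betaS (a : ℕ → ℚ) (s : Finset α) : ℚ := ∑ π ∈ parts s, ∏ B ∈ π, a B.card

lemma not_mem_of_inter_empty {B C : Finset α} {y : α} (h : B ∩ C = ∅) (hy : y ∈ B) : y ∉ C := by
  intro hyC
  have : y ∈ B ∩ C := Finset.mem_inter.mpr ⟨hy, hyC⟩
  simp [h] at this

lemma exists_block {s : Finset α} {π : Finset (Finset α)} (hπ : π ∈ parts s) {x : α}
    (hx : x ∈ s) : ∃ B ∈ π, x ∈ B ∧ ∀ C ∈ π, x ∈ C → C = B := by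
  obtain ⟨h1, h2, h3⟩ := mem_parts.mp hπ
  rw [← h3] at hx
  obtain ⟨B, hB, hxB⟩ := Finset.mem_sup.mp hx
  refine ⟨B, hB, hxB, fun C hC hxC => ?_⟩
  by_contra hne
  exact not_mem_of_inter_empty (h2 C hC B hB hne) hxC hxB

lemma block_subset {s : Finset α} {π : Finset (Finset α)} (hπ : π ∈ parts s) {B : Finset α}
    (hB : B ∈ π) : B ⊆ s := by
  obtain ⟨-, -, h3⟩ := mem_parts.mp hπ
  rw [← h3]; exact Finset.le_sup (f := id) hB

lemma erase_block_parts {s : Finset α} {π : Finset (Finset α)} (hπ : π ∈ parts s)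
    {B : Finset α} (hB : B ∈ π) : π.erase B ∈ parts (s \ B) := by
  obtain ⟨h1, h2, h3⟩ := mem_parts.mp hπ
  refine mem_parts.mpr ⟨fun C hC => h1 C (Finset.mem_of_mem_erase hC),
    fun C hC D hD hne => h2 C (Finset.mem_of_mem_erase hC) D (Finset.mem_of_mem_erase hD) hne,
    ?_⟩
  ext y
  simp only [Finset.mem_sup, Finset.mem_erase, id_eq, Finset.mem_sdiff]
  constructor
  · rintro ⟨C, ⟨hne, hC⟩, hyC⟩
    refine ⟨(block_subset hπ hC) hyC, not_mem_of_inter_empty (h2 C hC B hB hne) hyC⟩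
  · rintro ⟨hys, hyB⟩
    obtain ⟨C, hC, hyC⟩ := Finset.mem_sup.mp (h3 ▸ hys)
    exact ⟨C, ⟨fun h => hyB (h ▸ hyC), hC⟩, hyC⟩

lemma sdiff_erase_eq {s B : Finset α} {x : α} (hxB : x ∈ B) (hBs : B ⊆ s) :
    s.erase x \ B.erase x = s \ B := by
  ext y
  simp only [Finset.mem_sdiff, Finset.mem_erase]
  constructor
  · rintro ⟨⟨hyx, hys⟩, h⟩
    exact ⟨hys, fun hyB => h ⟨hyx, hyB⟩⟩
  · rintro ⟨hys, hyB⟩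
    exact ⟨⟨fun h => hyB (h ▸ hxB), hys⟩, fun ⟨_, hyB'⟩ => hyB hyB'⟩

lemma insert_parts {s : Finset α} {x : α} (hx : x ∈ s) {T : Finset α}
    (hT : T ⊆ s.erase x) {σ : Finset (Finset α)} (hσ : σ ∈ parts (s.erase x \ T)) :
    insert (insert x T) σ ∈ parts s ∧ insert x T ∉ σ ∧ x ∉ T := by
  obtain ⟨h1, h2, h3⟩ := mem_parts.mp hσ
  have hxT : x ∉ T := fun h => Finset.notMem_erase x s (hT h)
  have hblock : ∀ C ∈ σ, C ⊆ s.erase x \ T := fun C hC => by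
    rw [← h3]; exact Finset.le_sup (f := id) hC
  have hxC : ∀ C ∈ σ, x ∉ C := fun C hC h =>
    Finset.notMem_erase x s (Finset.mem_sdiff.mp (hblock C hC h)).1
  have hDC : ∀ C ∈ σ, insert x T ∩ C = ∅ := by
    intro C hC
    rw [Finset.eq_empty_iff_forall_notMem]
    rintro y hy
    obtain ⟨hy1, hy2⟩ := Finset.mem_inter.mp hy
    rcases Finset.mem_insert.mp hy1 with rfl | hyT
    · exact hxC C hC hy2
    · exact (Finset.mem_sdiff.mp (hblock C hC hy2)).2 hyT
  have hnotmem : insert x T ∉ σ := fun h => hxC _ h (Finset.mem_insert_self x T)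
  refine ⟨mem_parts.mpr ⟨?_, ?_, ?_⟩, hnotmem, hxT⟩
  · intro B hB
    rcases Finset.mem_insert.mp hB with rfl | hB
    · exact ⟨x, Finset.mem_insert_self x T⟩
    · exact h1 B hB
  · intro B hB C hC hne
    rcases Finset.mem_insert.mp hB with rfl | hB <;> rcases Finset.mem_insert.mp hC with rfl | hC
    · exact absurd rfl hne
    · exact hDC C hC
    · rw [Finset.inter_comm]; exact hDC B hB
    · exact h2 B hB C hC hne
  · rw [Finset.sup_insert, h3]
    ext y
    simp only [Finset.sup_eq_union, Finset.mem_union, id_eq, Finset.mem_insert, Finset.mem_sdiff,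
      Finset.mem_erase]
    constructor
    · rintro ((rfl | hyT) | ⟨⟨-, hys⟩, -⟩)
      · exact hx
      · exact Finset.mem_of_mem_erase (hT hyT)
      · exact hys
    · intro hys
      by_cases hyx : y = x
      · exact Or.inl (Or.inl hyx)
      · by_cases hyT : y ∈ T
        · exact Or.inl (Or.inr hyT)
        · exact Or.inr ⟨⟨hyx, hys⟩, hyT⟩

lemma filter_eq_erase_block {s : Finset α} {π : Finset (Finset α)} (hπ : π ∈ parts s)
    {x : α} {B : Finset α} (hB : B ∈ π) (hxB : x ∈ B)
    (huniq : ∀ C ∈ π, x ∈ C → C = B) :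
    (s.erase x).filter (fun y => ∃ C ∈ π, x ∈ C ∧ y ∈ C) = B.erase x ∧
      π.filter (fun C => x ∉ C) = π.erase B := by
  constructor
  · ext y
    simp only [Finset.mem_filter, Finset.mem_erase]
    constructor
    · rintro ⟨⟨hyx, hys⟩, C, hC, hxC, hyC⟩
      exact ⟨hyx, (huniq C hC hxC) ▸ hyC⟩
    · rintro ⟨hyx, hyB⟩
      exact ⟨⟨hyx, block_subset hπ hB hyB⟩, B, hB, hxB, hyB⟩
  · ext C
    simp only [Finset.mem_filter, Finset.mem_erase]
    constructor
    · rintro ⟨hC, hxC⟩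
      exact ⟨fun h => hxC (h ▸ hxB), hC⟩
    · rintro ⟨hne, hC⟩
      exact ⟨hC, fun hxC => hne (huniq C hC hxC)⟩

lemma betaS_rec (a : ℕ → ℚ) (s : Finset α) {x : α} (hx : x ∈ s) :
    betaS a s = ∑ T ∈ (s.erase x).powerset, a (T.card + 1) * betaS a ((s.erase x) \ T) := by
  classical
  rw [betaS]
  simp only [betaS, Finset.mul_sum]
  rw [← Finset.sum_sigma ((s.erase x).powerset) (fun T => parts (s.erase x \ T))
      (fun p => a (p.1.card + 1) * ∏ B ∈ p.2, a B.card)]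
  refine Finset.sum_bij'
    (i := fun π hπ => ⟨(s.erase x).filter (fun y => ∃ B ∈ π, x ∈ B ∧ y ∈ B),
                       π.filter (fun B => x ∉ B)⟩)
    (j := fun p hp => insert (insert x p.1) p.2) ?_ ?_ ?_ ?_ ?_
  · -- i maps into sigma
    intro π hπ
    obtain ⟨B, hB, hxB, huniq⟩ := exists_block hπ hx
    obtain ⟨hTeq, hσeq⟩ := filter_eq_erase_block hπ hB hxB huniq
    rw [Finset.mem_sigma]
    constructor
    · exact Finset.mem_powerset.mpr (Finset.filter_subset _ _)
    · rw [hTeq, hσeq, sdiff_erase_eq hxB (block_subset hπ hB)]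
      exact erase_block_parts hπ hB
  · -- j maps into parts s
    rintro ⟨T, σ⟩ hp
    simp only [Finset.mem_sigma] at hp
    exact (insert_parts hx (Finset.mem_powerset.mp hp.1) hp.2).1
  · -- left inverse
    intro π hπ
    dsimp only
    obtain ⟨B, hB, hxB, huniq⟩ := exists_block hπ hx
    obtain ⟨hTeq, hσeq⟩ := filter_eq_erase_block hπ hB hxB huniq
    simp only [hTeq, hσeq, Finset.insert_erase hxB, Finset.insert_erase hB]
  · -- right inverse
    rintro ⟨T, σ⟩ hp
    simp only [Finset.mem_sigma] at hp
    dsimp only at *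
    obtain ⟨hπ₀, hnotmem, hxT⟩ := insert_parts hx (Finset.mem_powerset.mp hp.1) hp.2
    have hD : insert x T ∈ insert (insert x T) σ := Finset.mem_insert_self _ _
    have hxD : x ∈ insert x T := Finset.mem_insert_self x T
    have huniq : ∀ C ∈ insert (insert x T) σ, x ∈ C → C = insert x T := by
      intro C hC hxC
      rcases Finset.mem_insert.mp hC with rfl | hC
      · rfl
      · obtain ⟨-, -, h3⟩ := mem_parts.mp hp.2
        exfalso
        have : C ⊆ s.erase x \ T := by rw [← h3]; exact Finset.le_sup (f := id) hC
        exact Finset.notMem_erase x s (Finset.mem_sdiff.mp (this hxC)).1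
    obtain ⟨hTeq, hσeq⟩ := filter_eq_erase_block hπ₀ hD hxD huniq
    show (⟨_, _⟩ : Σ _ : Finset α, Finset (Finset α)) = ⟨T, σ⟩
    rw [hTeq, hσeq, Finset.erase_insert hxT, Finset.erase_insert hnotmem]
  · -- summands agree
    intro π hπ
    dsimp only
    obtain ⟨B, hB, hxB, huniq⟩ := exists_block hπ hx
    obtain ⟨hTeq, hσeq⟩ := filter_eq_erase_block hπ hB hxB huniq
    simp only [hTeq, hσeq]
    rw [Finset.card_erase_add_one hxB, ← Finset.mul_prod_erase π _ hB]

lemma parts_empty : parts (∅ : Finset α) = {∅} := by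
  ext π
  simp only [mem_parts, Finset.mem_singleton]
  constructor
  · rintro ⟨h1, _, h3⟩
    rw [Finset.eq_empty_iff_forall_notMem]
    intro B hB
    obtain ⟨y, hy⟩ := h1 B hB
    have := (Finset.le_sup (f := id) hB : B ⊆ π.sup id) hy
    simp [h3] at this
  · rintro rfl; simp

def beta' (a : ℕ → ℚ) : ℕ → ℚ
  | 0 => 1
  | n + 1 => ∑ k ∈ Finset.range (n + 1), (n.choose k : ℚ) * a (k + 1) * beta' a (n - k)

lemma betaS_eq (a : ℕ → ℚ) (s : Finset α) : betaS a s = beta' a s.card := by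
  induction s using Finset.strongInduction with
  | _ s ih =>
    rcases s.eq_empty_or_nonempty with rfl | ⟨x, hx⟩
    · simp [betaS, parts_empty, beta']
    · have hcard : s.card = (s.erase x).card + 1 := by
        have h0 : 0 < s.card := Finset.card_pos.mpr ⟨x, hx⟩
        rw [Finset.card_erase_of_mem hx]
        omega
      rw [betaS_rec a s hx]
      have step : ∀ T ∈ (s.erase x).powerset,
          a (T.card + 1) * betaS a (s.erase x \ T) =
            a (T.card + 1) * beta' a ((s.erase x).card - T.card) := by
        intro T hT
        rw [Finset.mem_powerset] at hT
        have hsub : s.erase x \ T ⊂ s := by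
          refine Finset.ssubset_iff_of_subset ?_ |>.mpr ⟨x, hx, ?_⟩
          · exact (Finset.sdiff_subset).trans (Finset.erase_subset _ _)
          · simp
        rw [ih _ hsub, Finset.card_sdiff_of_subset hT]
      rw [Finset.sum_congr rfl step, hcard]
      rw [Finset.sum_powerset_apply_card
        (f := fun k => a (k + 1) * beta' a ((s.erase x).card - k)) (x := s.erase x)]
      rw [beta']
      refine Finset.sum_congr rfl fun k _ => ?_
      rw [nsmul_eq_mul, mul_assoc]

lemma beta_eq_beta' (a : ℕ → ℚ) (n : ℕ) : beta a n = beta' a n := by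
  have h : setPartitions n = parts (Finset.univ : Finset (Fin n)) := by
    ext π
    simp only [setPartitions, parts, IsSetPartition, Finset.mem_filter, Finset.mem_univ,
      true_and]
  have : beta a n = betaS a (Finset.univ : Finset (Fin n)) := by
    rw [beta, betaS, h]
  rw [this, betaS_eq, Finset.card_univ, Fintype.card_fin]

end Combinatorial

section Analytic
open Finset PowerSeries
open scoped Classical


variable {F : PowerSeries ℚ}

lemma coeff_pow_eq_zero (hF : PowerSeries.constantCoeff F = 0) :
    ∀ {k n : ℕ}, n < k → PowerSeries.coeff n (F ^ k) = 0 := by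
  intro k
  induction k with
  | zero => intro n h; omega
  | succ k ih =>
    intro n h
    rw [pow_succ, PowerSeries.coeff_mul]
    refine Finset.sum_eq_zero fun p hp => ?_
    rw [Finset.HasAntidiagonal.mem_antidiagonal] at hp
    rcases Nat.eq_zero_or_pos p.2 with h2 | h2
    · rw [h2, PowerSeries.coeff_zero_eq_constantCoeff, hF, mul_zero]
    · rw [ih (by omega), zero_mul]

lemma expComp_coeff_ext (hF : PowerSeries.constantCoeff F = 0) {n N : ℕ} (h : n ≤ N) :
    PowerSeries.coeff n (expComp F) =
      ∑ k ∈ Finset.range (N + 1), (k.factorial : ℚ)⁻¹ * PowerSeries.coeff n (F ^ k) := by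
  rw [expComp, PowerSeries.coeff_mk]
  refine Finset.sum_subset (by intro k hk; simp only [Finset.mem_range] at *; omega) ?_
  intro k hk hk'
  simp only [Finset.mem_range, not_lt] at hk hk'
  rw [coeff_pow_eq_zero hF (by omega), mul_zero]

lemma expComp_deriv (hF : PowerSeries.constantCoeff F = 0) (n : ℕ) :
    ((n : ℚ) + 1) * PowerSeries.coeff (n + 1) (expComp F) =
      ∑ p ∈ Finset.HasAntidiagonal.antidiagonal n,
        (((p.2 : ℚ) + 1) * PowerSeries.coeff (p.2 + 1) F) *
          PowerSeries.coeff p.1 (expComp F) := by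
  rw [expComp, PowerSeries.coeff_mk, Finset.mul_sum]
  have step : ∀ k, ((n : ℚ) + 1) * ((k.factorial : ℚ)⁻¹ * PowerSeries.coeff (n + 1) (F ^ k)) =
      (k.factorial : ℚ)⁻¹ * PowerSeries.coeff n (PowerSeries.derivative ℚ (F ^ k)) := by
    intro k
    rw [PowerSeries.coeff_derivative]
    push_cast
    ring
  calc ∑ k ∈ Finset.range (n + 1 + 1),
        ((n : ℚ) + 1) * ((k.factorial : ℚ)⁻¹ * PowerSeries.coeff (n + 1) (F ^ k))
      = ∑ k ∈ Finset.range (n + 1 + 1),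
        (k.factorial : ℚ)⁻¹ * PowerSeries.coeff n (PowerSeries.derivative ℚ (F ^ k)) := by
        exact Finset.sum_congr rfl fun k _ => step k
    _ = ∑ j ∈ Finset.range (n + 1),
        (j.factorial : ℚ)⁻¹ * PowerSeries.coeff n (F ^ j * PowerSeries.derivative ℚ F) := by
        rw [Finset.sum_range_succ']
        simp only [pow_zero, Derivation.map_one_eq_zero, map_zero, mul_zero, add_zero]
        refine Finset.sum_congr rfl fun j _ => ?_
        rw [Derivation.leibniz_pow, Nat.add_sub_cancel, smul_eq_mul (a := F ^ j), map_nsmul,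
          nsmul_eq_mul]
        have hj : (j.factorial : ℚ) ≠ 0 := Nat.cast_ne_zero.mpr j.factorial_ne_zero
        rw [Nat.factorial_succ]
        push_cast
        field_simp
    _ = ∑ p ∈ Finset.HasAntidiagonal.antidiagonal n,
        (((p.2 : ℚ) + 1) * PowerSeries.coeff (p.2 + 1) F) *
          PowerSeries.coeff p.1 (expComp F) := by
        simp only [PowerSeries.coeff_mul, Finset.mul_sum]
        rw [Finset.sum_comm]
        refine Finset.sum_congr rfl fun p hp => ?_
        rw [Finset.HasAntidiagonal.mem_antidiagonal] at hp
        have h1 : p.1 ≤ n := by omega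
        simp only [← mul_assoc]
        rw [← Finset.sum_mul, ← expComp_coeff_ext hF h1, PowerSeries.coeff_derivative]
        ring

end Analytic

lemma coeff_expComp_eq (a : ℕ → ℚ) (n : ℕ) :
    PowerSeries.coeff n
        (expComp (PowerSeries.mk fun n => if n = 0 then 0 else a n / n.factorial)) =
      beta' a n / n.factorial := by
  set F : PowerSeries ℚ := PowerSeries.mk fun n => if n = 0 then 0 else a n / n.factorial with hFdef
  have hF : PowerSeries.constantCoeff F = 0 := by
    rw [← PowerSeries.coeff_zero_eq_constantCoeff, hFdef, PowerSeries.coeff_mk]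
    simp
  induction n using Nat.strong_induction_on with
  | _ n ih =>
    match n with
    | 0 =>
      rw [expComp, PowerSeries.coeff_mk]
      simp [beta']
    | m + 1 =>
      have hm1 : ((m : ℚ) + 1) ≠ 0 := by positivity
      have hd := expComp_deriv hF m
      have hd' : ((m : ℚ) + 1) * PowerSeries.coeff (m + 1) (expComp F) =
          ∑ k ∈ Finset.range (m + 1),
            a (m - k + 1) / (m - k).factorial * (beta' a k / k.factorial) := by
        rw [hd, ← Finset.Nat.sum_antidiagonal_eq_sum_range_succ
          (f := fun i j => a (j + 1) / (j).factorial * (beta' a i / (i).factorial)) (n := m)]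
        refine Finset.sum_congr rfl fun p hp => ?_
        rw [Finset.HasAntidiagonal.mem_antidiagonal] at hp
        rw [ih p.1 (by omega), hFdef, PowerSeries.coeff_mk]
        have : (p.2 + 1 : ℕ) ≠ 0 := by omega
        rw [if_neg this, Nat.factorial_succ]
        have h2 : ((p.2).factorial : ℚ) ≠ 0 := Nat.cast_ne_zero.mpr (Nat.factorial_ne_zero _)
        push_cast
        field_simp
      have key : ((m : ℚ) + 1) * PowerSeries.coeff (m + 1) (expComp F) =
          ((m : ℚ) + 1) * (beta' a (m + 1) / (m + 1).factorial) := by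
        rw [hd', beta']
        rw [← Finset.sum_range_reflect
          (fun k => (m.choose k : ℚ) * a (k + 1) * beta' a (m - k)) (m + 1)]
        rw [Finset.sum_div, Finset.mul_sum]
        refine Finset.sum_congr rfl fun k hk => ?_
        rw [Finset.mem_range] at hk
        have hkm : k ≤ m := by omega
        have e1 : m + 1 - 1 - k = m - k := by omega
        have e2 : m - (m - k) = k := by omega
        rw [e1, e2, Nat.choose_symm hkm, Nat.cast_choose ℚ hkm, Nat.factorial_succ]
        have h1 : ((k).factorial : ℚ) ≠ 0 := Nat.cast_ne_zero.mpr (Nat.factorial_ne_zero _)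
        have h2 : (((m - k)).factorial : ℚ) ≠ 0 := Nat.cast_ne_zero.mpr (Nat.factorial_ne_zero _)
        have h3 : ((m).factorial : ℚ) ≠ 0 := Nat.cast_ne_zero.mpr (Nat.factorial_ne_zero _)
        push_cast
        field_simp
      exact mul_left_cancel₀ hm1 key

/-- The exponential formula: `Σ_{n≥0} β_n X^n/n! = exp(Σ_{n≥1} a(n) X^n/n!)`. -/
theorem exponential_formula (a : ℕ → ℚ) :
    PowerSeries.mk (fun n => beta a n / n.factorial) =
      expComp (PowerSeries.mk fun n => if n = 0 then 0 else a n / n.factorial) := by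
  ext n
  rw [PowerSeries.coeff_mk, coeff_expComp_eq, beta_eq_beta']
end

section
/- Standardization is compatible with shifted unions: let π be a set partition of {1,…,n} and π' a set partition of {1,…,n'}; let S be any subset of the blocks of π and S' any subset of the blocks of π'. Let S'[n] denote the collection of blocks of S' with every element increased by n. Then std(S ∪ S'[n]) = std(S) ⊎ std(S'), where for a finite collection T of pairwise disjoint nonempty finite sets of positive integers, std(T) is the set partition of {1,…,m} (m the cardinality of the union of T) obtained by applying to each block the unique increasing bijection from the union of the blocks of T onto {1,…,m}. -/
/-- A set partition of `{1,…,n}` (as a finite collection of pairwise disjoint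
nonempty finsets of positive integers whose union is `{1,…,n}`). -/
def IsPartitionOf (n : ℕ) (π : Finset (Finset ℕ)) : Prop :=
  (∀ B ∈ π, B.Nonempty) ∧
  (∀ B ∈ π, ∀ C ∈ π, B ≠ C → B ∩ C = ∅) ∧
  π.sup id = Finset.Icc 1 n

/-- The blocks of `π` with every element increased by `n`. -/
def shiftBlocks (n : ℕ) (π : Finset (Finset ℕ)) : Finset (Finset ℕ) :=
  π.image fun B => B.image (· + n)

/-- The shifted union `π ⊎ π'`, where `π` is a set partition of `{1,…,n}`. -/
def shiftedUnion (n : ℕ) (π π' : Finset (Finset ℕ)) : Finset (Finset ℕ) :=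
  π ∪ shiftBlocks n π'

/-- The unique increasing bijection from a finset `F ⊆ ℕ` onto `{1,…,|F|}`:
`x ∈ F` is sent to the number of elements of `F` that are `≤ x`. -/
def stdMap (F : Finset ℕ) (x : ℕ) : ℕ := (F.filter (· ≤ x)).card

/-- Standardization: apply to each block of `T` the unique increasing bijection
from the union of the blocks of `T` onto `{1,…,m}`, where `m` is the
cardinality of that union. -/
def std (T : Finset (Finset ℕ)) : Finset (Finset ℕ) :=
  T.image fun B => B.image (stdMap (T.sup id))

lemma sup_image_image (S : Finset (Finset ℕ)) (f : ℕ → ℕ) :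
    S.sup (fun B => B.image f) = (S.sup id).image f := by
  induction S using Finset.induction_on with
  | empty => simp
  | insert a s h ih => simp [Finset.sup_insert, ih, Finset.image_union]


/-- Standardization is compatible with shifted unions:
`std(S ∪ S'[n]) = std(S) ⊎ std(S')` for any subsets `S`, `S'` of the blocks of
set partitions `π` of `{1,…,n}` and `π'` of `{1,…,n'}`. -/
theorem std_shiftedUnion (n n' : ℕ) (π π' : Finset (Finset ℕ))
    (hπ : IsPartitionOf n π) (hπ' : IsPartitionOf n' π')
    (S S' : Finset (Finset ℕ)) (hS : S ⊆ π) (hS' : S' ⊆ π') :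
    std (S ∪ shiftBlocks n S') = shiftedUnion (S.sup id).card (std S) (std S') := by
  obtain ⟨hne, -, hsup⟩ := hπ
  obtain ⟨hne', -, hsup'⟩ := hπ'
  set U := S.sup id with hU
  set U' := S'.sup id with hU'
  have hUsub : U ⊆ Finset.Icc 1 n := hsup ▸ Finset.sup_mono hS
  have hU'sub : U' ⊆ Finset.Icc 1 n' := hsup' ▸ Finset.sup_mono hS'
  have hUle : ∀ x ∈ U, x ≤ n := fun x hx => (Finset.mem_Icc.mp (hUsub hx)).2
  have hU'ge : ∀ y ∈ U', 1 ≤ y := fun y hy => (Finset.mem_Icc.mp (hU'sub hy)).1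
  have hW : (S ∪ shiftBlocks n S').sup id = U ∪ U'.image (· + n) := by
    rw [Finset.sup_union, shiftBlocks, Finset.sup_image]
    congr 1
    simpa using sup_image_image S' (· + n)
  set W := (S ∪ shiftBlocks n S').sup id with hWdef
  -- stdMap on old elements
  have key1 : ∀ x ∈ U, stdMap W x = stdMap U x := by
    intro x hx
    have hxn := hUle x hx
    unfold stdMap
    rw [hW, Finset.filter_union]
    have : (U'.image (· + n)).filter (· ≤ x) = ∅ := by
      rw [Finset.filter_eq_empty_iff]
      intro z hz
      obtain ⟨y, hy, rfl⟩ := Finset.mem_image.mp hz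
      have := hU'ge y hy
      omega
    rw [this, Finset.union_empty]
  -- stdMap on shifted elements
  have key2 : ∀ y ∈ U', stdMap W (y + n) = stdMap U' y + U.card := by
    intro y hy
    unfold stdMap
    rw [hW, Finset.filter_union]
    have h1 : U.filter (· ≤ y + n) = U := by
      rw [Finset.filter_eq_self]
      intro x hx
      have := hUle x hx
      omega
    have h2 : (U'.image (· + n)).filter (· ≤ y + n) = (U'.filter (· ≤ y)).image (· + n) := by
      ext z
      simp only [Finset.mem_filter, Finset.mem_image]
      constructor
      · rintro ⟨⟨w, hw, rfl⟩, hle⟩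
        exact ⟨w, ⟨hw, by omega⟩, rfl⟩
      · rintro ⟨w, ⟨hw, hle⟩, rfl⟩
        exact ⟨⟨w, hw, rfl⟩, by omega⟩
    rw [h1, h2, Finset.card_union_of_disjoint, Finset.card_image_of_injective _
      (fun a b h => by omega)]
    · ring
    · rw [Finset.disjoint_left]
      intro z hz hz'
      have h3 := hUle z hz
      obtain ⟨w, hw, h4⟩ := Finset.mem_image.mp hz'
      have := hU'ge w (Finset.mem_filter.mp hw).1
      omega
  -- now compute
  have hsubU : ∀ B ∈ S, B ⊆ U := fun B hB => Finset.le_sup (f := id) hB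
  have hsubU' : ∀ B ∈ S', B ⊆ U' := fun B hB => Finset.le_sup (f := id) hB
  unfold std shiftedUnion shiftBlocks
  rw [Finset.image_union]
  congr 1
  · apply Finset.image_congr
    intro B hB
    apply Finset.image_congr
    intro x hx
    exact key1 x (hsubU B hB hx)
  · rw [Finset.image_image, Finset.image_image]
    apply Finset.image_congr
    intro B hB
    simp only [Function.comp, Finset.image_image]
    apply Finset.image_congr
    intro y hy
    simp only [Function.comp]
    exact key2 y (hsubU' B hB hy)
end

section
/- Unique factorization of set partitions into lists into indivisible ones (freeness of BWSym): every set partition into lists Π of {1,…,n} (n ≥ 0) can be written in exactly one way as Π = Π_1 ⊎ Π_2 ⊎ ⋯ ⊎ Π_k, where k ≥ 0, each Π_i is an indivisible set partition into lists of some {1,…,n_i} with n_i ≥ 1, and n_1 + ⋯ + n_k = n. -/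
/-- A set partition into lists of `{1,…,n}`: a finite set of nonempty lists of
distinct positive integers, with all entries across all lists distinct, whose
set of entries is exactly `{1,…,n}`. -/
def IsListPartitionOf (n : ℕ) (P : Finset (List ℕ)) : Prop :=
  (∀ l ∈ P, l ≠ []) ∧
  (∀ l ∈ P, l.Nodup) ∧
  (∀ l ∈ P, ∀ l' ∈ P, l ≠ l' → ∀ x ∈ l, x ∉ l') ∧
  P.sup (fun l => l.toFinset) = Finset.Icc 1 n

/-- The lists of `P` with every entry increased by `n`. -/
def shiftLists (n : ℕ) (P : Finset (List ℕ)) : Finset (List ℕ) :=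
  P.image fun l => l.map (· + n)

/-- The shifted union `P ⊎ P'`, where `P` is a set partition into lists of
`{1,…,n}`. -/
def shiftedUnionL (n : ℕ) (P P' : Finset (List ℕ)) : Finset (List ℕ) :=
  P ∪ shiftLists n P'

/-- A set partition into lists `P` of `{1,…,n}`, `n ≥ 1`, is indivisible if
whenever `P = P' ⊎ P''` with `P'` a set partition into lists of `{1,…,n'}` and
`P''` one of `{1,…,n''}`, `n' + n'' = n`, one has `n' = 0` or `n'' = 0`. -/
def IndivisibleL (n : ℕ) (P : Finset (List ℕ)) : Prop :=
  1 ≤ n ∧ IsListPartitionOf n P ∧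
  ∀ n' n'' (P' P'' : Finset (List ℕ)),
    IsListPartitionOf n' P' → IsListPartitionOf n'' P'' → n' + n'' = n →
    P = shiftedUnionL n' P' P'' → n' = 0 ∨ n'' = 0

/-- Iterated shifted union `P_1 ⊎ P_2 ⊎ ⋯ ⊎ P_k` of a list of pairs
`(n_i, P_i)` where `P_i` is a set partition into lists of `{1,…,n_i}`. -/
def concatPartsL : List (ℕ × Finset (List ℕ)) → Finset (List ℕ)
  | [] => ∅
  | (m, P) :: rest => shiftedUnionL m P (concatPartsL rest)

-- AUX START

lemma mem_su {a : ℕ} {P' P'' : Finset (List ℕ)} {l : List ℕ} :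
    l ∈ shiftedUnionL a P' P'' ↔ l ∈ P' ∨ ∃ u ∈ P'', u.map (· + a) = l := by
  simp [shiftedUnionL, shiftLists, Finset.mem_union, Finset.mem_image]

lemma map_cancel {f : ℕ → ℕ} {l : List ℕ} (h : ∀ x ∈ l, f x = x) : l.map f = l := by
  calc l.map f = l.map id := List.map_congr_left h
  _ = l := List.map_id l

lemma entry_bounds {n : ℕ} {P : Finset (List ℕ)} (hP : IsListPartitionOf n P)
    {l : List ℕ} {x : ℕ} (hl : l ∈ P) (hx : x ∈ l) : 1 ≤ x ∧ x ≤ n := by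
  have : x ∈ P.sup (fun l => l.toFinset) :=
    Finset.mem_sup.2 ⟨l, hl, List.mem_toFinset.2 hx⟩
  rw [hP.2.2.2] at this
  exact Finset.mem_Icc.1 this

lemma exists_mem {n : ℕ} {P : Finset (List ℕ)} (hP : IsListPartitionOf n P)
    {x : ℕ} (h1 : 1 ≤ x) (h2 : x ≤ n) : ∃ l ∈ P, x ∈ l := by
  have : x ∈ P.sup (fun l => l.toFinset) := by
    rw [hP.2.2.2]; exact Finset.mem_Icc.2 ⟨h1, h2⟩
  obtain ⟨l, hl, hx⟩ := Finset.mem_sup.1 this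
  exact ⟨l, hl, List.mem_toFinset.1 hx⟩

lemma su_partition {a b : ℕ} {P' P'' : Finset (List ℕ)}
    (h' : IsListPartitionOf a P') (h'' : IsListPartitionOf b P'') :
    IsListPartitionOf (a + b) (shiftedUnionL a P' P'') := by
  refine ⟨?_, ?_, ?_, ?_⟩
  · intro l hl
    rcases mem_su.1 hl with h | ⟨u, hu, rfl⟩
    · exact h'.1 l h
    · simpa using h''.1 u hu
  · intro l hl
    rcases mem_su.1 hl with h | ⟨u, hu, rfl⟩
    · exact h'.2.1 l h
    · exact (h''.2.1 u hu).map (add_left_injective a)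
  · intro l hl l' hl' hne x hx hx'
    rcases mem_su.1 hl with h | ⟨u, hu, rfl⟩ <;>
      rcases mem_su.1 hl' with h2 | ⟨v, hv, rfl⟩
    · exact h'.2.2.1 l h l' h2 hne x hx hx'
    · obtain ⟨y, hy, rfl⟩ := List.mem_map.1 hx'
      have := (entry_bounds h' h hx).2
      have := (entry_bounds h'' hv hy).1
      omega
    · obtain ⟨y, hy, rfl⟩ := List.mem_map.1 hx
      have := (entry_bounds h' h2 hx').2
      have := (entry_bounds h'' hu hy).1
      omega
    · obtain ⟨y, hy, rfl⟩ := List.mem_map.1 hx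
      have huv : u ≠ v := fun h => hne (by rw [h])
      have hnv : y ∉ v := h''.2.2.1 u hu v hv huv y hy
      obtain ⟨z, hz, hzy⟩ := List.mem_map.1 hx'
      have hzy2 : z = y := by omega
      exact hnv (hzy2 ▸ hz)
  · ext x
    rw [Finset.mem_sup, Finset.mem_Icc]
    constructor
    · rintro ⟨l, hl, hx⟩
      rw [List.mem_toFinset] at hx
      rcases mem_su.1 hl with h | ⟨u, hu, rfl⟩
      · have := entry_bounds h' h hx; omega
      · obtain ⟨y, hy, rfl⟩ := List.mem_map.1 hx
        have := entry_bounds h'' hu hy; omega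
    · rintro ⟨h1, h2⟩
      by_cases hxa : x ≤ a
      · obtain ⟨l, hl, hx⟩ := exists_mem h' h1 hxa
        exact ⟨l, mem_su.2 (Or.inl hl), List.mem_toFinset.2 hx⟩
      · obtain ⟨u, hu, hy⟩ := exists_mem h'' (x := x - a) (by omega) (by omega)
        refine ⟨u.map (· + a), mem_su.2 (Or.inr ⟨u, hu, rfl⟩), ?_⟩
        rw [List.mem_toFinset, List.mem_map]
        exact ⟨x - a, hy, by omega⟩

def lowP (m : ℕ) (P : Finset (List ℕ)) : Finset (List ℕ) :=
  P.filter fun l => ∀ x ∈ l, x ≤ m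

def highP (m : ℕ) (P : Finset (List ℕ)) : Finset (List ℕ) :=
  (P.filter fun l => ¬ ∀ x ∈ l, x ≤ m).image fun l => l.map (· - m)

def IsBreak (m : ℕ) (P : Finset (List ℕ)) : Prop :=
  ∀ l ∈ P, (∀ x ∈ l, x ≤ m) ∨ (∀ x ∈ l, m < x)

lemma decompose {n m : ℕ} {P : Finset (List ℕ)} (hP : IsListPartitionOf n P)
    (hbr : IsBreak m P) (hm : m ≤ n) :
    IsListPartitionOf m (lowP m P) ∧ IsListPartitionOf (n - m) (highP m P) ∧
      P = shiftedUnionL m (lowP m P) (highP m P) := by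
  have hmemlow : ∀ l, l ∈ lowP m P ↔ l ∈ P ∧ ∀ x ∈ l, x ≤ m := by
    intro l; simp [lowP]
  have hmemhigh : ∀ l, l ∈ highP m P ↔
      ∃ u, (u ∈ P ∧ ¬ ∀ x ∈ u, x ≤ m) ∧ u.map (· - m) = l := by
    intro l; simp [highP]
  have hhi : ∀ u ∈ P, (¬ ∀ x ∈ u, x ≤ m) → ∀ x ∈ u, m < x := by
    intro u hu hnot
    rcases hbr u hu with h | h
    · exact absurd h hnot
    · exact h
  refine ⟨⟨?_, ?_, ?_, ?_⟩, ⟨?_, ?_, ?_, ?_⟩, ?_⟩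
  · intro l hl; exact hP.1 l ((hmemlow l).1 hl).1
  · intro l hl; exact hP.2.1 l ((hmemlow l).1 hl).1
  · intro l hl l' hl' hne x hx
    exact hP.2.2.1 l ((hmemlow l).1 hl).1 l' ((hmemlow l').1 hl').1 hne x hx
  · ext x
    rw [Finset.mem_sup, Finset.mem_Icc]
    constructor
    · rintro ⟨l, hl, hx⟩
      rw [List.mem_toFinset] at hx
      obtain ⟨hlP, hle⟩ := (hmemlow l).1 hl
      have := entry_bounds hP hlP hx
      exact ⟨this.1, hle x hx⟩
    · rintro ⟨h1, h2⟩
      obtain ⟨l, hl, hx⟩ := exists_mem hP h1 (le_trans h2 hm)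
      have hlow : ∀ y ∈ l, y ≤ m := by
        rcases hbr l hl with h | h
        · exact h
        · exact absurd (h x hx) (by omega)
      exact ⟨l, (hmemlow l).2 ⟨hl, hlow⟩, List.mem_toFinset.2 hx⟩
  · intro l hl
    obtain ⟨u, ⟨hu, hnot⟩, rfl⟩ := (hmemhigh _).1 hl
    simpa using hP.1 u hu
  · intro l hl
    obtain ⟨u, ⟨hu, hnot⟩, rfl⟩ := (hmemhigh _).1 hl
    refine List.Nodup.map_on ?_ (hP.2.1 u hu)
    intro x hx y hy hxy
    have := hhi u hu hnot x hx
    have := hhi u hu hnot y hy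
    omega
  · intro l hl l' hl' hne x hx hx'
    obtain ⟨u, ⟨hu, hnu⟩, rfl⟩ := (hmemhigh _).1 hl
    obtain ⟨v, ⟨hv, hnv⟩, rfl⟩ := (hmemhigh _).1 hl'
    obtain ⟨y, hy, rfl⟩ := List.mem_map.1 hx
    obtain ⟨z, hz, hzy⟩ := List.mem_map.1 hx'
    have hy' := hhi u hu hnu y hy
    have hz' := hhi v hv hnv z hz
    have hzye : z = y := by omega
    have huv : u ≠ v := fun h => hne (by rw [h])
    exact hP.2.2.1 u hu v hv huv y hy (hzye ▸ hz)
  · ext x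
    rw [Finset.mem_sup, Finset.mem_Icc]
    constructor
    · rintro ⟨l, hl, hx⟩
      rw [List.mem_toFinset] at hx
      obtain ⟨u, ⟨hu, hnu⟩, rfl⟩ := (hmemhigh _).1 hl
      obtain ⟨y, hy, rfl⟩ := List.mem_map.1 hx
      have := hhi u hu hnu y hy
      have := entry_bounds hP hu hy
      omega
    · rintro ⟨h1, h2⟩
      obtain ⟨u, hu, hy⟩ := exists_mem hP (x := x + m) (by omega) (by omega)
      have hnu : ¬ ∀ z ∈ u, z ≤ m := fun h => by have := h _ hy; omega
      refine ⟨u.map (· - m), (hmemhigh _).2 ⟨u, ⟨hu, hnu⟩, rfl⟩, ?_⟩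
      rw [List.mem_toFinset, List.mem_map]
      exact ⟨x + m, hy, by omega⟩
  · ext l
    rw [mem_su]
    constructor
    · intro hl
      by_cases h : ∀ x ∈ l, x ≤ m
      · exact Or.inl ((hmemlow l).2 ⟨hl, h⟩)
      · refine Or.inr ⟨l.map (· - m), (hmemhigh _).2 ⟨l, ⟨hl, h⟩, rfl⟩, ?_⟩
        rw [List.map_map]
        exact map_cancel fun x hx => by have := hhi l hl h x hx; simp; omega
    · rintro (h | ⟨u, hu, rfl⟩)
      · exact ((hmemlow l).1 h).1
      · obtain ⟨v, ⟨hv, hnv⟩, rfl⟩ := (hmemhigh _).1 hu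
        rw [List.map_map]
        have heq : v.map ((fun x => x + m) ∘ fun x => x - m) = v :=
          map_cancel fun x hx => by have := hhi v hv hnv x hx; simp; omega
        rw [heq]; exact hv

lemma recover {a b : ℕ} {P' P'' : Finset (List ℕ)}
    (h' : IsListPartitionOf a P') (h'' : IsListPartitionOf b P'') :
    IsBreak a (shiftedUnionL a P' P'') ∧ lowP a (shiftedUnionL a P' P'') = P' ∧
      highP a (shiftedUnionL a P' P'') = P'' := by
  have hbr : IsBreak a (shiftedUnionL a P' P'') := by
    intro l hl
    rcases mem_su.1 hl with h | ⟨u, hu, rfl⟩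
    · exact Or.inl fun x hx => (entry_bounds h' h hx).2
    · refine Or.inr fun x hx => ?_
      obtain ⟨y, hy, rfl⟩ := List.mem_map.1 hx
      have := (entry_bounds h'' hu hy).1; omega
  refine ⟨hbr, ?_, ?_⟩
  · ext l
    simp only [lowP, Finset.mem_filter]
    constructor
    · rintro ⟨hl, hle⟩
      rcases mem_su.1 hl with h | ⟨u, hu, rfl⟩
      · exact h
      · exfalso
        obtain ⟨y, hy⟩ := List.exists_mem_of_ne_nil u (h''.1 u hu)
        have := (entry_bounds h'' hu hy).1
        have := hle (y + a) (List.mem_map.2 ⟨y, hy, rfl⟩)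
        omega
    · intro hl
      exact ⟨mem_su.2 (Or.inl hl), fun x hx => (entry_bounds h' hl hx).2⟩
  · ext l
    simp only [highP, Finset.mem_image, Finset.mem_filter]
    constructor
    · rintro ⟨u, ⟨hu, hnu⟩, rfl⟩
      rcases mem_su.1 hu with h | ⟨v, hv, rfl⟩
      · exact absurd (fun x hx => (entry_bounds h' h hx).2) hnu
      · rw [List.map_map]
        have heq : v.map ((fun x => x - a) ∘ fun x => x + a) = v :=
          map_cancel fun x hx => by simp
        rw [heq]; exact hv
    · intro hl
      refine ⟨l.map (· + a), ⟨mem_su.2 (Or.inr ⟨l, hl, rfl⟩), ?_⟩, ?_⟩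
      · intro h
        obtain ⟨y, hy⟩ := List.exists_mem_of_ne_nil l (h''.1 l hl)
        have := (entry_bounds h'' hl hy).1
        have := h (y + a) (List.mem_map.2 ⟨y, hy, rfl⟩)
        omega
      · rw [List.map_map]
        exact map_cancel fun x hx => by simp

lemma indivisible_iff {n : ℕ} {P : Finset (List ℕ)} (hn : 1 ≤ n)
    (hP : IsListPartitionOf n P) :
    IndivisibleL n P ↔ ∀ m, 0 < m → m < n → ¬ IsBreak m P := by
  constructor
  · rintro ⟨-, -, hind⟩ m hm hmn hbr
    obtain ⟨h1, h2, h3⟩ := decompose hP hbr (le_of_lt hmn)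
    rcases hind m (n - m) _ _ h1 h2 (by omega) h3 with h | h <;> omega
  · intro h
    refine ⟨hn, hP, ?_⟩
    intro a b P' P'' h' h'' hab heq
    by_contra hcon
    push_neg at hcon
    have hbr : IsBreak a P := heq ▸ (recover h' h'').1
    exact h a (by omega) (by omega) hbr

lemma concat_partition : ∀ L : List (ℕ × Finset (List ℕ)),
    (∀ p ∈ L, IndivisibleL p.1 p.2) →
    IsListPartitionOf (L.map Prod.fst).sum (concatPartsL L)
  | [], _ => by
      refine ⟨by simp [concatPartsL], by simp [concatPartsL], by simp [concatPartsL], ?_⟩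
      simp [concatPartsL]
  | (m, Q) :: rest, h => by
      have h1 : IndivisibleL m Q := h (m, Q) (by simp)
      have h2 := concat_partition rest (fun p hp => h p (List.mem_cons_of_mem _ hp))
      simpa [concatPartsL] using su_partition h1.2.1 h2

theorem main_thm : ∀ n : ℕ, ∀ P : Finset (List ℕ), IsListPartitionOf n P →
    ∃! L : List (ℕ × Finset (List ℕ)),
      (∀ p ∈ L, IndivisibleL p.1 p.2) ∧
      (L.map Prod.fst).sum = n ∧
      concatPartsL L = P := by
  intro n
  induction n using Nat.strong_induction_on with
  | _ n ih =>
  intro P hP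
  rcases Nat.eq_zero_or_pos n with rfl | hn
  · refine ⟨[], ⟨by simp, by simp, ?_⟩, ?_⟩
    · have : P = ∅ := by
        rw [Finset.eq_empty_iff_forall_notMem]
        intro l hl
        obtain ⟨y, hy⟩ := List.exists_mem_of_ne_nil l (hP.1 l hl)
        have := entry_bounds hP hl hy; omega
      simp [concatPartsL, this]
    · rintro L ⟨hind, hsum, hcat⟩
      cases L with
      | nil => rfl
      | cons p rest =>
        have := (hind p (by simp)).1
        simp at hsum
        omega
  · classical
    have hex : ∃ m, 0 < m ∧ IsBreak m P := by
      refine ⟨n, hn, fun l hl => Or.inl fun x hx => (entry_bounds hP hl hx).2⟩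
    set m := Nat.find hex with hmdef
    obtain ⟨hm0, hmbr⟩ := Nat.find_spec hex
    have hmn : m ≤ n := Nat.find_min' hex ⟨hn, fun l hl => Or.inl fun x hx => (entry_bounds hP hl hx).2⟩
    obtain ⟨h1, h2, h3⟩ := decompose hP hmbr hmn
    have hind1 : IndivisibleL m (lowP m P) := by
      rw [indivisible_iff hm0 h1]
      intro k hk0 hkm hbr
      have hPbr : IsBreak k P := by
        rw [h3]
        intro l hl
        rcases mem_su.1 hl with hmem | ⟨u, hu, rfl⟩
        · exact hbr l hmem
        · refine Or.inr fun x hx => ?_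
          obtain ⟨y, hy, rfl⟩ := List.mem_map.1 hx
          have := (entry_bounds h2 hu hy).1; omega
      exact Nat.find_min hex hkm ⟨hk0, hPbr⟩
    obtain ⟨L₂, ⟨hL₂ind, hL₂sum, hL₂cat⟩, hL₂uniq⟩ := ih (n - m) (by omega) (highP m P) h2
    refine ⟨(m, lowP m P) :: L₂, ⟨?_, ?_, ?_⟩, ?_⟩
    · rintro p hp
      rcases List.mem_cons.1 hp with rfl | hp
      · exact hind1
      · exact hL₂ind p hp
    · simp [hL₂sum]; omega
    · simp only [concatPartsL, hL₂cat]; exact h3.symm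
    · rintro L ⟨hind, hsum, hcat⟩
      cases L with
      | nil => simp at hsum; omega
      | cons p rest =>
        obtain ⟨m', Q⟩ := p
        have hQind : IndivisibleL m' Q := hind (m', Q) (by simp)
        have hrest : ∀ p ∈ rest, IndivisibleL p.1 p.2 :=
          fun p hp => hind p (List.mem_cons_of_mem _ hp)
        have hrestpart := concat_partition rest hrest
        have hsum' : m' + (rest.map Prod.fst).sum = n := by simpa using hsum
        have hcat' : P = shiftedUnionL m' Q (concatPartsL rest) := by
          rw [← hcat]; rfl
        obtain ⟨hbr', hlow', hhigh'⟩ := recover hQind.2.1 hrestpart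
        rw [← hcat'] at hbr' hlow' hhigh'
        have hm'0 : 0 < m' := hQind.1
        have hle : m ≤ m' := Nat.find_min' hex ⟨hm'0, hbr'⟩
        have hmeq : m' = m := by
          by_contra hne
          have hmlt : m < m' := lt_of_le_of_ne hle (fun h => hne h.symm)
          have hbrQ : IsBreak m Q := by
            rw [← hlow']
            intro l hl
            exact hmbr l (Finset.mem_filter.1 hl).1
          exact (indivisible_iff hm'0 hQind.2.1).1 hQind m hm0 hmlt hbrQ
        subst hmeq
        have hQeq : Q = lowP m P := hlow'.symm
        have hcrest : concatPartsL rest = highP m P := hhigh'.symm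
        have : rest = L₂ := hL₂uniq rest ⟨hrest, by omega, hcrest⟩
        rw [hQeq, this]


/-- Unique factorization of set partitions into lists into indivisible ones
(freeness of `BWSym`): every set partition into lists of `{1,…,n}` can be
written in exactly one way as `P_1 ⊎ ⋯ ⊎ P_k` with each `P_i` an indivisible
set partition into lists of `{1,…,n_i}`, `n_i ≥ 1`, `n_1 + ⋯ + n_k = n`. -/
theorem unique_factorization_list_partitions (n : ℕ) (P : Finset (List ℕ))
    (hP : IsListPartitionOf n P) :
    ∃! L : List (ℕ × Finset (List ℕ)),
      (∀ p ∈ L, IndivisibleL p.1 p.2) ∧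
      (L.map Prod.fst).sum = n ∧
      concatPartsL L = P := by
  exact main_thm n P hP
end
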